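/- Let X ∈ G_q(n,k) have extended representation with columns ((v_n,X_n),...,(v_1,X_1)), and let w_j = ∑_{ℓ=1}^j v_ℓ with w_0 = 0. Then the number of k-dimensional subspaces Y of F_q^n with Y < X in the extended-representation lexicographic order equals ∑_{j=1}^n ( v_j·q^{k-w_{j-1}} + (1-v_j)·{X_j}/q^{w_{j-1}} ) · [n-j choose k-w_{j-1}]_q, where {X_j} is the value of the column X_j read as a base-q integer. -/

import Mathlib

open Finset
open scoped Classical

/-- The Gaussian binomial coefficient `[n choose k]_q`. -/
noncomputable def gaussQ (q n k : ℕ) : ℚ :=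
  ∏ i ∈ Finset.range k, (((q : ℚ) ^ (n - i) - 1) / ((q : ℚ) ^ (k - i) - 1))

/-- `M` is in reduced row echelon form with pivot columns `piv`. -/
def IsRREF {Fq : Type} [Field Fq] {k n : ℕ}
    (M : Matrix (Fin k) (Fin n) Fq) (piv : Fin k → Fin n) : Prop :=
  StrictMono piv ∧ (∀ i, M i (piv i) = 1) ∧
    (∀ i (j : Fin n), (j : ℕ) < (piv i : ℕ) → M i j = 0) ∧
    (∀ i i', i' ≠ i → M i' (piv i) = 0)

/-- The value `{X_c}` of column `c` of `N` read as a base-`q` integer (top entry most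
significant), where entries of `F_q` are identified with digits via the bijection `φ`. -/
noncomputable def colVal {Fq : Type} [Field Fq] [Fintype Fq] {k n : ℕ}
    (φ : Fq ≃ Fin (Fintype.card Fq)) (N : Matrix (Fin k) (Fin n) Fq) (c : Fin n) : ℕ :=
  ∑ i : Fin k, (φ (N i c) : ℕ) * (Fintype.card Fq) ^ (k - 1 - (i : ℕ))

/-- The value of column `c` of the extended representation (identifying-vector bit on top,
most significant). -/
noncomputable def extVal {Fq : Type} [Field Fq] [Fintype Fq] {k n : ℕ}
    (φ : Fq ≃ Fin (Fintype.card Fq)) (N : Matrix (Fin k) (Fin n) Fq)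
    (piv' : Fin k → Fin n) (c : Fin n) : ℕ :=
  (if ∃ i, piv' i = c then (Fintype.card Fq) ^ k else 0) + colVal φ N c

/-- The extended-representation lexicographic order: `(N,piv') < (M,piv)` iff at the
rightmost column (largest Lean index = least paper index) where the extended
representations differ, the column of `(N,piv')` has smaller base-`q` value. -/
def ExtLt {Fq : Type} [Field Fq] [Fintype Fq] {k n : ℕ}
    (φ : Fq ≃ Fin (Fintype.card Fq))
    (N : Matrix (Fin k) (Fin n) Fq) (piv' : Fin k → Fin n)
    (M : Matrix (Fin k) (Fin n) Fq) (piv : Fin k → Fin n) : Prop :=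
  ∃ c : Fin n, (∀ c' : Fin n, c < c' →
      (((∃ i, piv' i = c') ↔ (∃ i, piv i = c')) ∧ ∀ i, N i c' = M i c')) ∧
    extVal φ N piv' c < extVal φ M piv c

section Gauss

variable {q : ℕ} (hq : 2 ≤ q)

private def Nm (q c r : ℕ) : ℚ := ∏ i ∈ Finset.range r, ((q : ℚ) ^ (c - i) - 1)

include hq

lemma qpow_sub_one_pos {m : ℕ} (hm : 1 ≤ m) : (0:ℚ) < (q:ℚ) ^ m - 1 := by
  have : (2:ℚ) ≤ (q:ℚ) := by exact_mod_cast hq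
  have h2 : (2:ℚ) ≤ (q:ℚ) ^ m := by
    calc (2:ℚ) ≤ (q:ℚ) := this
    _ = (q:ℚ)^1 := (pow_one _).symm
    _ ≤ (q:ℚ)^m := pow_le_pow_right₀ (by linarith) hm
  linarith

lemma D_ne_zero (r : ℕ) : (Nm q r r) ≠ 0 := by
  unfold Nm
  apply Finset.prod_ne_zero_iff.2
  intro i hi
  have hi' : i < r := Finset.mem_range.1 hi
  have := qpow_sub_one_pos hq (m := r - i) (by omega)
  exact ne_of_gt this

lemma gaussQ_eq_div (c r : ℕ) : gaussQ q c r = Nm q c r / Nm q r r := by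
  unfold gaussQ Nm
  rw [← Finset.prod_div_distrib]

lemma gaussQ_zero_right (c : ℕ) : gaussQ q c 0 = 1 := by
  unfold gaussQ; simp

lemma gaussQ_eq_zero {c r : ℕ} (h : c < r) : gaussQ q c r = 0 := by
  unfold gaussQ
  apply Finset.prod_eq_zero (Finset.mem_range.2 h)
  simp [Nat.sub_self]

lemma gaussQ_pascal {c r : ℕ} (hr : 1 ≤ r) (hrc : r ≤ c) :
    gaussQ q c r = (q:ℚ) ^ (c - r) * gaussQ q (c-1) (r-1) + gaussQ q (c-1) r := by
  obtain ⟨r', rfl⟩ : ∃ r', r = r' + 1 := ⟨r - 1, by omega⟩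
  obtain ⟨c', rfl⟩ : ∃ c', c = c' + 1 := ⟨c - 1, by omega⟩
  simp only [Nat.add_sub_cancel]
  rw [gaussQ_eq_div hq, gaussQ_eq_div hq, gaussQ_eq_div hq]
  have hNm1 : Nm q (c'+1) (r'+1) = Nm q c' r' * ((q:ℚ)^(c'+1) - 1) := by
    unfold Nm
    rw [Finset.prod_range_succ']
    have : ∀ i ∈ Finset.range r', ((q:ℚ) ^ (c'+1-(i+1)) - 1) = ((q:ℚ)^(c'-i) - 1) := by
      intro i _; congr 2; omega
    rw [Finset.prod_congr rfl this]
    norm_num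
  have hNm2 : Nm q c' (r'+1) = Nm q c' r' * ((q:ℚ)^(c' - r') - 1) := by
    unfold Nm; rw [Finset.prod_range_succ]
  have hD : Nm q (r'+1) (r'+1) = Nm q r' r' * ((q:ℚ)^(r'+1) - 1) := by
    unfold Nm
    rw [Finset.prod_range_succ']
    have : ∀ i ∈ Finset.range r', ((q:ℚ) ^ (r'+1-(i+1)) - 1) = ((q:ℚ)^(r'-i) - 1) := by
      intro i _; congr 2; omega
    rw [Finset.prod_congr rfl this]
    norm_num
  rw [hNm1, hNm2, hD]
  have h1 : Nm q r' r' ≠ 0 := D_ne_zero hq r'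
  have h2 : ((q:ℚ)^(r'+1) - 1) ≠ 0 := ne_of_gt (qpow_sub_one_pos hq (by omega))
  have hqc2 : c' + 1 - (r'+1) = c' - r' := by omega
  rw [hqc2]
  have key : (q:ℚ)^(c'+1) - 1 = (q:ℚ)^(c'-r') * ((q:ℚ)^(r'+1)-1) + ((q:ℚ)^(c'-r')-1) := by
    have : (q:ℚ)^(c'-r') * (q:ℚ)^(r'+1) = (q:ℚ)^(c'+1) := by
      rw [← pow_add]; congr 1; omega
    ring_nf
    ring_nf at this
    linarith
  rw [key]
  field_simp
end Gauss

section Digits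

variable {Fq : Type} [Field Fq] [Fintype Fq] (φ : Fq ≃ Fin (Fintype.card Fq))

/-- value of a tuple read as base-q digits, first entry most significant -/
noncomputable def colB {r : ℕ} (b : Fin r → Fq) : ℕ :=
  ∑ i : Fin r, (φ (b i) : ℕ) * (Fintype.card Fq) ^ (r - 1 - (i : ℕ))

noncomputable def digitEquiv (r : ℕ) : (Fin r → Fq) ≃ Fin (Fintype.card Fq ^ r) :=
  (Equiv.arrowCongr Fin.revPerm φ).trans finFunctionFinEquiv

lemma digitEquiv_val {r : ℕ} (b : Fin r → Fq) :
    ((digitEquiv φ r b : Fin (Fintype.card Fq ^ r)) : ℕ) = colB φ b := by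
  unfold digitEquiv colB
  rw [Equiv.trans_apply, finFunctionFinEquiv_apply]
  refine Fintype.sum_equiv Fin.revPerm _ _ ?_
  intro i
  simp only [Equiv.arrowCongr_apply, Function.comp_apply, Fin.revPerm_symm,
    Fin.rev_rev]
  congr 1
  have := i.isLt
  simp only [Fin.revPerm_apply, Fin.val_rev]
  congr 1
  omega

lemma colB_lt {r : ℕ} (b : Fin r → Fq) : colB φ b < Fintype.card Fq ^ r := by
  rw [← digitEquiv_val φ b]; exact (digitEquiv φ r b).isLt

lemma card_colB_lt {r A : ℕ} (hA : A ≤ Fintype.card Fq ^ r) :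
    Nat.card {b : Fin r → Fq // colB φ b < A} = A := by
  have e1 : {b : Fin r → Fq // colB φ b < A} ≃ {m : Fin (Fintype.card Fq ^ r) // (m : ℕ) < A} :=
    Equiv.subtypeEquiv (digitEquiv φ r) (fun b => by rw [digitEquiv_val])
  have e2 : {m : Fin (Fintype.card Fq ^ r) // (m : ℕ) < A} ≃ Fin A :=
    { toFun := fun m => ⟨m.1, m.2⟩
      invFun := fun a => ⟨⟨a, lt_of_lt_of_le a.2 hA⟩, a.2⟩
      left_inv := fun m => by ext; rfl
      right_inv := fun a => rfl }
  rw [Nat.card_congr (e1.trans e2), Nat.card_eq_fintype_card, Fintype.card_fin]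

end Digits
section Uniq

lemma strictMono_eq_of_image_eq {k n : ℕ} {f g : Fin k → Fin n}
    (hf : StrictMono f) (hg : StrictMono g)
    (h : Finset.image f Finset.univ = Finset.image g Finset.univ) : f = g := by
  have hcard : (Finset.image f Finset.univ).card = k := by
    rw [Finset.card_image_of_injective _ hf.injective, Finset.card_univ, Fintype.card_fin]
  have h1 := Finset.orderEmbOfFin_unique hcard
      (f := f) (fun x => Finset.mem_image_of_mem f (Finset.mem_univ x)) hf
  have h2 := Finset.orderEmbOfFin_unique hcard
      (f := g) (fun x => by rw [h]; exact Finset.mem_image_of_mem g (Finset.mem_univ x)) hg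
  rw [h1, h2]

variable {Fq : Type} [Field Fq] {k n : ℕ}

lemma rref_coeff {N : Matrix (Fin k) (Fin n) Fq} {piv' : Fin k → Fin n}
    (h : IsRREF N piv') (a : Fin k → Fq) (j : Fin k) :
    (∑ i, a i • N i) (piv' j) = a j := by
  obtain ⟨hmono, h1, h2, h3⟩ := h
  rw [Finset.sum_apply]
  rw [Finset.sum_eq_single j]
  · simp [h1 j]
  · intro i _ hij
    simp [h3 j i hij]
  · intro hj; exact absurd (Finset.mem_univ j) hj

lemma rref_leading {N' : Matrix (Fin k) (Fin n) Fq} {piv'' : Fin k → Fin n}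
    (h : IsRREF N' piv'') {x : Fin n → Fq}
    (hx : x ∈ Submodule.span Fq (Set.range fun i => N' i))
    {j0 : Fin n} (hj0 : x j0 ≠ 0) (hlead : ∀ j : Fin n, j < j0 → x j = 0) :
    ∃ i, piv'' i = j0 := by
  obtain ⟨a, ha⟩ := (Submodule.mem_span_range_iff_exists_fun Fq).1 hx
  have hs : (Finset.univ.filter (fun i => a i ≠ 0)).Nonempty := by
    by_contra hcon
    rw [Finset.not_nonempty_iff_eq_empty, Finset.filter_eq_empty_iff] at hcon
    apply hj0
    rw [← ha]
    rw [Finset.sum_apply]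
    apply Finset.sum_eq_zero
    intro i _
    have : a i = 0 := by
      by_contra hne; exact (hcon (Finset.mem_univ i)) hne
    simp [this]
  set i0 := (Finset.univ.filter (fun i => a i ≠ 0)).min' hs with hi0
  have hi0mem := Finset.min'_mem _ hs
  have hai0 : a i0 ≠ 0 := (Finset.mem_filter.1 hi0mem).2
  have hxp : x (piv'' i0) = a i0 := by rw [← ha]; exact rref_coeff h a i0
  have hzero : ∀ j : Fin n, j < piv'' i0 → x j = 0 := by
    intro j hj
    rw [← ha, Finset.sum_apply]
    apply Finset.sum_eq_zero
    intro i _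
    by_cases hai : a i = 0
    · simp [hai]
    · have hle : i0 ≤ i := Finset.min'_le _ _ (Finset.mem_filter.2 ⟨Finset.mem_univ i, hai⟩)
      have hjp : j < piv'' i := lt_of_lt_of_le hj (h.1.monotone hle)
      have hz : N' i j = 0 := h.2.2.1 i j hjp
      simp [hz]
  refine ⟨i0, ?_⟩
  rcases lt_trichotomy (piv'' i0) j0 with hlt | heq | hgt
  · exact absurd (hlead _ hlt) (hxp ▸ hai0)
  · exact heq
  · exact absurd (hzero _ hgt) hj0

lemma rref_span_inj {N N' : Matrix (Fin k) (Fin n) Fq} {piv' piv'' : Fin k → Fin n}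
    (h : IsRREF N piv') (h' : IsRREF N' piv'')
    (hsp : Submodule.span Fq (Set.range fun i => N i)
         = Submodule.span Fq (Set.range fun i => N' i)) :
    N = N' ∧ piv' = piv'' := by
  have hrowmem : ∀ j, (N j) ∈ Submodule.span Fq (Set.range fun i => N' i) := by
    intro j
    rw [← hsp]
    exact Submodule.subset_span ⟨j, rfl⟩
  have hrowmem' : ∀ j, (N' j) ∈ Submodule.span Fq (Set.range fun i => N i) := by
    intro j
    rw [hsp]
    exact Submodule.subset_span ⟨j, rfl⟩
  have hsub : ∀ j, ∃ i, piv'' i = piv' j := by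
    intro j
    refine rref_leading h' (hrowmem j) ?_ ?_
    · rw [h.2.1 j]; exact one_ne_zero
    · intro c hc; exact h.2.2.1 j c hc
  have hsub' : ∀ j, ∃ i, piv' i = piv'' j := by
    intro j
    refine rref_leading h (hrowmem' j) ?_ ?_
    · rw [h'.2.1 j]; exact one_ne_zero
    · intro c hc; exact h'.2.2.1 j c hc
  have himg : Finset.image piv' Finset.univ = Finset.image piv'' Finset.univ := by
    apply Finset.Subset.antisymm
    · intro x hx
      obtain ⟨j, _, rfl⟩ := Finset.mem_image.1 hx
      obtain ⟨i, hi⟩ := hsub j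
      exact Finset.mem_image.2 ⟨i, Finset.mem_univ i, hi⟩
    · intro x hx
      obtain ⟨j, _, rfl⟩ := Finset.mem_image.1 hx
      obtain ⟨i, hi⟩ := hsub' j
      exact Finset.mem_image.2 ⟨i, Finset.mem_univ i, hi⟩
  have hpiv : piv' = piv'' := strictMono_eq_of_image_eq h.1 h'.1 himg
  subst hpiv
  refine ⟨?_, rfl⟩
  funext j c
  obtain ⟨a, ha⟩ := (Submodule.mem_span_range_iff_exists_fun Fq).1 (hrowmem j)
  have haval : ∀ i, a i = N j (piv' i) := by
    intro i
    have := rref_coeff h' a i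
    rw [ha] at this
    exact this.symm
  have hNa : ∀ i, a i = if i = j then 1 else 0 := by
    intro i
    rw [haval i]
    by_cases hij : i = j
    · subst hij; simp [h.2.1 i]
    · simp [hij, h.2.2.2 i j (by exact fun hc => hij hc.symm)]
  rw [← ha, Finset.sum_apply]
  rw [Finset.sum_eq_single j]
  · simp [hNa j]
  · intro i _ hij; simp [hNa i, hij]
  · intro hj; exact absurd (Finset.mem_univ j) hj

end Uniq
section Count

variable {Fq : Type} [Field Fq] [Fintype Fq]

lemma card_split {α : Type*} [Fintype α] (P Q : α → Prop) :
    Nat.card {x // P x} = Nat.card {x // P x ∧ Q x} + Nat.card {x // P x ∧ ¬ Q x} := by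
  classical
  rw [Nat.card_eq_fintype_card, Nat.card_eq_fintype_card, Nat.card_eq_fintype_card]
  rw [Fintype.card_subtype, Fintype.card_subtype, Fintype.card_subtype]
  rw [← Finset.card_filter_add_card_filter_not (s := Finset.univ.filter P) Q]
  congr 1
  · rw [Finset.filter_filter]
  · rw [Finset.filter_filter]

private noncomputable def vfill {m r : ℕ} (f : Fin r → Fin m)
    (g : {j : Fin m // ¬ ∃ i, f i = j} → Fq) (j : Fin m) : Fq :=
  if h : ∃ i, f i = j then 0 else g ⟨j, h⟩

private lemma vfill_pos {m r : ℕ} (f : Fin r → Fin m)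
    (g : {j : Fin m // ¬ ∃ i, f i = j} → Fq) (i : Fin r) : vfill f g (f i) = 0 := by
  rw [vfill, dif_pos (⟨i, rfl⟩ : ∃ i', f i' = f i)]

private lemma vfill_neg {m r : ℕ} (f : Fin r → Fin m)
    (g : {j : Fin m // ¬ ∃ i, f i = j} → Fq) (j : Fin m) (h : ¬ ∃ i, f i = j) :
    vfill f g j = g ⟨j, h⟩ := by
  rw [vfill, dif_neg h]

lemma card_vanish {m r : ℕ} (hrm : r ≤ m) (f : Fin r → Fin m) (hf : Function.Injective f) :
    Nat.card {t : Fin m → Fq // ∀ i, t (f i) = 0} = Fintype.card Fq ^ (m - r) := by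
  classical
  have e : {t : Fin m → Fq // ∀ i, t (f i) = 0} ≃ ({j : Fin m // ¬ ∃ i, f i = j} → Fq) :=
    { toFun := fun t j => t.1 j.1
      invFun := fun g => ⟨vfill f g, fun i => vfill_pos f g i⟩
      left_inv := fun t => by
        apply Subtype.ext
        funext j
        show vfill f (fun j' => t.1 j'.1) j = t.1 j
        by_cases h : ∃ i, f i = j
        · obtain ⟨i, rfl⟩ := h
          rw [vfill_pos]
          exact (t.2 i).symm
        · rw [vfill_neg f (fun j' => t.1 j'.1) j h]
      right_inv := fun g => by
        funext j
        show vfill f g j.1 = g j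
        rw [vfill_neg f g j.1 j.2] }
  rw [Nat.card_congr e, Nat.card_eq_fintype_card, Fintype.card_fun]
  congr 1
  have h1 : Fintype.card {j : Fin m // ∃ i, f i = j} = r := by
    have e2 : {j : Fin m // ∃ i, f i = j} ≃ Set.range f :=
      Equiv.subtypeEquivRight (fun j => Iff.rfl)
    rw [Fintype.card_congr (e2.trans (Equiv.ofInjective f hf).symm), Fintype.card_fin]
  rw [Fintype.card_subtype_compl, h1, Fintype.card_fin]

noncomputable def rrefCount (Fq : Type) [Field Fq] [Fintype Fq] (c r : ℕ) : ℕ :=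
  Nat.card {p : Matrix (Fin r) (Fin c) Fq × (Fin r → Fin c) // IsRREF p.1 p.2}

lemma rrefCount_zero_rows (c : ℕ) : rrefCount Fq c 0 = 1 := by
  rw [rrefCount, Nat.card_eq_one_iff_unique]
  constructor
  · constructor
    intro a b
    apply Subtype.ext
    apply Prod.ext
    · funext i; exact i.elim0
    · funext i; exact i.elim0
  · exact ⟨⟨(Matrix.of fun i _ => i.elim0, fun i => i.elim0),
      ⟨fun i => i.elim0, fun i => i.elim0, fun i => i.elim0, fun i => i.elim0⟩⟩⟩

lemma rrefCount_eq_zero {c r : ℕ} (h : c < r) : rrefCount Fq c r = 0 := by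
  rw [rrefCount, Nat.card_eq_zero]
  left
  constructor
  intro p
  have hinj : Function.Injective p.1.2 := p.2.1.injective
  have := Fintype.card_le_of_injective p.1.2 hinj
  simp only [Fintype.card_fin] at this
  omega

end Count
section Count2

variable {Fq : Type} [Field Fq] [Fintype Fq]

lemma card_sigma_split {α β : Type*} [Fintype α] [Fintype β] (P : α → Prop) (Q : α → β → Prop) :
    Nat.card {x : α × β // P x.1 ∧ Q x.1 x.2} = ∑ a : {a // P a}, Nat.card {t : β // Q a.1 t} := by
  classical
  have e : {x : α × β // P x.1 ∧ Q x.1 x.2} ≃ Σ a : {a // P a}, {t : β // Q a.1 t} :=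
    { toFun := fun x => ⟨⟨x.1.1, x.2.1⟩, ⟨x.1.2, x.2.2⟩⟩
      invFun := fun s => ⟨(s.1.1, s.2.1), ⟨s.1.2, s.2.2⟩⟩
      left_inv := fun x => rfl
      right_inv := fun s => rfl }
  rw [Nat.card_congr e, Nat.card_eq_fintype_card, Fintype.card_sigma]
  exact Finset.sum_congr rfl (fun a _ => (Nat.card_eq_fintype_card).symm)

variable {c r : ℕ}

/-- reconstruction map for the pivot-at-column-0 case -/
def unpeelA (x : (Matrix (Fin r) (Fin c) Fq × (Fin r → Fin c)) × (Fin c → Fq)) :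
    Matrix (Fin (r+1)) (Fin (c+1)) Fq × (Fin (r+1) → Fin (c+1)) :=
  (Matrix.of (Fin.cons (Fin.cons 1 x.2) (fun i => Fin.cons 0 (x.1.1 i))),
    Fin.cons 0 (fun i => (x.1.2 i).succ))

lemma unpeelA_mem {x : (Matrix (Fin r) (Fin c) Fq × (Fin r → Fin c)) × (Fin c → Fq)}
    (hx : IsRREF x.1.1 x.1.2 ∧ ∀ i, x.2 (x.1.2 i) = 0) :
    (IsRREF (unpeelA x).1 (unpeelA x).2) ∧ (unpeelA x).2 0 = 0 := by
  obtain ⟨⟨hmono, h1, h2, h3⟩, hv⟩ := hx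
  refine ⟨⟨?_, ?_, ?_, ?_⟩, by simp [unpeelA]⟩
  · -- strict mono
    intro a b hab
    obtain rfl | ⟨b', rfl⟩ := b.eq_zero_or_eq_succ
    · exact absurd hab (Fin.not_lt_zero a).elim
    · obtain rfl | ⟨a', rfl⟩ := a.eq_zero_or_eq_succ
      · simp only [unpeelA, Fin.cons_zero, Fin.cons_succ]
        exact Fin.succ_pos _
      · simp only [unpeelA, Fin.cons_succ]
        have : a' < b' := by rwa [Fin.succ_lt_succ_iff] at hab
        exact Fin.succ_lt_succ_iff.2 (hmono this)
  · -- pivot entries are 1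
    intro i
    obtain rfl | ⟨i', rfl⟩ := i.eq_zero_or_eq_succ
    · simp [unpeelA]
    · simp only [unpeelA, Matrix.of_apply, Fin.cons_succ]
      exact h1 i'
  · -- zero left of pivot
    intro i j hj
    obtain rfl | ⟨i', rfl⟩ := i.eq_zero_or_eq_succ
    · simp only [unpeelA, Fin.cons_zero, Fin.val_zero] at hj
      omega
    · simp only [unpeelA, Fin.cons_succ, Fin.val_succ] at hj
      obtain rfl | ⟨j', rfl⟩ := j.eq_zero_or_eq_succ
      · simp [unpeelA]
      · simp only [unpeelA, Matrix.of_apply, Fin.cons_succ]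
        apply h2
        simp only [Fin.val_succ] at hj
        omega
  · -- zeros elsewhere in pivot columns
    intro i i' hii
    obtain rfl | ⟨i1, rfl⟩ := i.eq_zero_or_eq_succ
    · -- pivot column 0
      obtain rfl | ⟨i2, rfl⟩ := i'.eq_zero_or_eq_succ
      · exact absurd rfl hii
      · simp [unpeelA]
    · -- pivot column (x.1.2 i1).succ
      obtain rfl | ⟨i2, rfl⟩ := i'.eq_zero_or_eq_succ
      · simp only [unpeelA, Matrix.of_apply, Fin.cons_zero, Fin.cons_succ]
        exact hv i1
      · simp only [unpeelA, Matrix.of_apply, Fin.cons_succ]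
        exact h3 i1 i2 (fun hc => hii (by rw [hc]))

lemma unpeelA_inj : Function.Injective
    (unpeelA : (Matrix (Fin r) (Fin c) Fq × (Fin r → Fin c)) × (Fin c → Fq) → _) := by
  intro x y hxy
  obtain ⟨hN, hp⟩ := Prod.mk.injEq _ _ _ _ ▸ hxy
  have hN' := congrFun (congrArg (fun M => M.1) hxy)
  have hp' := congrFun (congrArg (fun M => M.2) hxy)
  refine Prod.ext (Prod.ext ?_ ?_) ?_
  · funext i j
    have := congrFun (hN' i.succ) j.succ
    simpa [unpeelA] using this
  · funext i
    have := hp' i.succ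
    simp only [unpeelA, Fin.cons_succ] at this
    exact Fin.succ_injective _ this
  · funext j
    have := congrFun (hN' 0) j.succ
    simpa [unpeelA] using this

lemma unpeelA_surj {p : Matrix (Fin (r+1)) (Fin (c+1)) Fq × (Fin (r+1) → Fin (c+1))}
    (hp : IsRREF p.1 p.2 ∧ p.2 0 = 0) :
    ∃ x : (Matrix (Fin r) (Fin c) Fq × (Fin r → Fin c)) × (Fin c → Fq),
      (IsRREF x.1.1 x.1.2 ∧ ∀ i, x.2 (x.1.2 i) = 0) ∧ unpeelA x = p := by
  obtain ⟨⟨hmono, h1, h2, h3⟩, h0⟩ := hp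
  have hne : ∀ i : Fin r, p.2 i.succ ≠ 0 := by
    intro i hc
    have : p.2 0 < p.2 i.succ := hmono (Fin.succ_pos i)
    rw [h0, hc] at this
    exact lt_irrefl _ this
  refine ⟨((Matrix.of fun i j => p.1 i.succ j.succ, fun i => (p.2 i.succ).pred (hne i)),
      fun j => p.1 0 j.succ), ⟨⟨?_, ?_, ?_, ?_⟩, ?_⟩, ?_⟩
  · intro a b hab
    rw [Fin.pred_lt_pred_iff]
    exact hmono (Fin.succ_lt_succ_iff.2 hab)
  · intro i
    show p.1 i.succ _ = 1
    rw [Fin.succ_pred]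
    exact h1 i.succ
  · intro i j hj
    show p.1 i.succ j.succ = 0
    apply h2 i.succ
    have := (hne i)
    have hv : (p.2 i.succ : ℕ) ≠ 0 := fun hc => this (Fin.ext hc)
    simp only [Fin.coe_pred] at hj
    simp only [Fin.val_succ]
    omega
  · intro i i' hii
    show p.1 i'.succ _ = 0
    rw [Fin.succ_pred]
    exact h3 i.succ i'.succ (fun hc => hii (Fin.succ_injective _ hc))
  · intro i
    show p.1 0 _ = 0
    rw [Fin.succ_pred]
    exact h3 i.succ 0 (Fin.succ_ne_zero i).symm
  · refine Prod.ext ?_ ?_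
    · funext i j
      obtain rfl | ⟨i', rfl⟩ := i.eq_zero_or_eq_succ
      · obtain rfl | ⟨j', rfl⟩ := j.eq_zero_or_eq_succ
        · simp only [unpeelA, Matrix.of_apply, Fin.cons_zero]
          rw [← h0]
          exact (h1 0).symm
        · simp [unpeelA]
      · obtain rfl | ⟨j', rfl⟩ := j.eq_zero_or_eq_succ
        · simp only [unpeelA, Matrix.of_apply, Fin.cons_succ, Fin.cons_zero]
          refine (h2 i'.succ 0 ?_).symm
          have hv : (p.2 i'.succ : ℕ) ≠ 0 := fun hc => (hne i') (Fin.ext hc)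
          simp only [Fin.val_zero]
          omega
        · simp [unpeelA]
    · funext i
      obtain rfl | ⟨i', rfl⟩ := i.eq_zero_or_eq_succ
      · simp [unpeelA, h0.symm]
      · simp only [unpeelA, Fin.cons_succ]
        exact Fin.succ_pred _ _

lemma cardA (hrc : r ≤ c) :
    Nat.card {p : Matrix (Fin (r+1)) (Fin (c+1)) Fq × (Fin (r+1) → Fin (c+1)) //
        IsRREF p.1 p.2 ∧ p.2 0 = 0}
      = Fintype.card Fq ^ (c - r) * rrefCount Fq c r := by
  classical
  have e : {x : (Matrix (Fin r) (Fin c) Fq × (Fin r → Fin c)) × (Fin c → Fq) //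
        IsRREF x.1.1 x.1.2 ∧ ∀ i, x.2 (x.1.2 i) = 0}
      ≃ {p : Matrix (Fin (r+1)) (Fin (c+1)) Fq × (Fin (r+1) → Fin (c+1)) //
        IsRREF p.1 p.2 ∧ p.2 0 = 0} := by
    refine Equiv.ofBijective (fun x => ⟨unpeelA x.1, unpeelA_mem x.2⟩) ⟨?_, ?_⟩
    · intro x y hxy
      exact Subtype.ext (unpeelA_inj (congrArg Subtype.val hxy))
    · rintro ⟨p, hp⟩
      obtain ⟨x, hx, hxp⟩ := unpeelA_surj hp
      exact ⟨⟨x, hx⟩, Subtype.ext hxp⟩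
  rw [← Nat.card_congr e]
  rw [card_sigma_split (fun a : Matrix (Fin r) (Fin c) Fq × (Fin r → Fin c) => IsRREF a.1 a.2)
    (fun (a : Matrix (Fin r) (Fin c) Fq × (Fin r → Fin c)) (t : Fin c → Fq) =>
      ∀ i, t (a.2 i) = 0)]
  rw [Finset.sum_congr rfl (fun (a : {a : Matrix (Fin r) (Fin c) Fq × (Fin r → Fin c) //
      IsRREF a.1 a.2}) _ => card_vanish hrc a.1.2 a.2.1.injective)]
  rw [Finset.sum_const, Finset.card_univ, smul_eq_mul, mul_comm]
  rw [rrefCount, Nat.card_eq_fintype_card]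

/-- reconstruction map for the no-pivot-at-column-0 case -/
def unpeelB (x : Matrix (Fin (r+1)) (Fin c) Fq × (Fin (r+1) → Fin c)) :
    Matrix (Fin (r+1)) (Fin (c+1)) Fq × (Fin (r+1) → Fin (c+1)) :=
  (Matrix.of (fun i => Fin.cons 0 (x.1 i)), fun i => (x.2 i).succ)

lemma unpeelB_mem {x : Matrix (Fin (r+1)) (Fin c) Fq × (Fin (r+1) → Fin c)}
    (hx : IsRREF x.1 x.2) :
    (IsRREF (unpeelB x).1 (unpeelB x).2) ∧ ¬ (unpeelB x).2 0 = 0 := by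
  obtain ⟨hmono, h1, h2, h3⟩ := hx
  refine ⟨⟨?_, ?_, ?_, ?_⟩, ?_⟩
  · intro a b hab
    exact Fin.succ_lt_succ_iff.2 (hmono hab)
  · intro i
    simp only [unpeelB, Matrix.of_apply, Fin.cons_succ]
    exact h1 i
  · intro i j hj
    simp only [unpeelB, Fin.val_succ] at hj
    obtain rfl | ⟨j', rfl⟩ := j.eq_zero_or_eq_succ
    · simp [unpeelB]
    · simp only [unpeelB, Matrix.of_apply, Fin.cons_succ]
      apply h2
      simp only [Fin.val_succ] at hj
      omega
  · intro i i' hii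
    simp only [unpeelB, Matrix.of_apply, Fin.cons_succ]
    exact h3 i i' hii
  · exact Fin.succ_ne_zero _

lemma unpeelB_inj : Function.Injective
    (unpeelB : Matrix (Fin (r+1)) (Fin c) Fq × (Fin (r+1) → Fin c) → _) := by
  intro x y hxy
  have hN' := congrFun (congrArg (fun M => M.1) hxy)
  have hp' := congrFun (congrArg (fun M => M.2) hxy)
  refine Prod.ext ?_ ?_
  · funext i j
    have := congrFun (hN' i) j.succ
    simpa [unpeelB] using this
  · funext i
    exact Fin.succ_injective _ (hp' i)

lemma unpeelB_surj {p : Matrix (Fin (r+1)) (Fin (c+1)) Fq × (Fin (r+1) → Fin (c+1))}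
    (hp : IsRREF p.1 p.2 ∧ ¬ p.2 0 = 0) :
    ∃ x : Matrix (Fin (r+1)) (Fin c) Fq × (Fin (r+1) → Fin c),
      IsRREF x.1 x.2 ∧ unpeelB x = p := by
  obtain ⟨⟨hmono, h1, h2, h3⟩, h0⟩ := hp
  have hne : ∀ i, p.2 i ≠ 0 := by
    intro i hc
    obtain rfl | ⟨i', rfl⟩ := i.eq_zero_or_eq_succ
    · exact h0 hc
    · have : p.2 0 < p.2 i'.succ := hmono (Fin.succ_pos i')
      rw [hc] at this
      exact absurd this (Fin.not_lt_zero _)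
  refine ⟨(Matrix.of fun i j => p.1 i j.succ, fun i => (p.2 i).pred (hne i)),
      ⟨?_, ?_, ?_, ?_⟩, ?_⟩
  · intro a b hab
    rw [Fin.pred_lt_pred_iff]
    exact hmono hab
  · intro i
    show p.1 i _ = 1
    rw [Fin.succ_pred]
    exact h1 i
  · intro i j hj
    show p.1 i j.succ = 0
    apply h2 i
    have hv : (p.2 i : ℕ) ≠ 0 := fun hc => (hne i) (Fin.ext hc)
    simp only [Fin.coe_pred] at hj
    simp only [Fin.val_succ]
    omega
  · intro i i' hii
    show p.1 i' _ = 0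
    rw [Fin.succ_pred]
    exact h3 i i' hii
  · refine Prod.ext ?_ ?_
    · funext i j
      obtain rfl | ⟨j', rfl⟩ := j.eq_zero_or_eq_succ
      · simp only [unpeelB, Matrix.of_apply, Fin.cons_zero]
        refine (h2 i 0 ?_).symm
        have hv : (p.2 i : ℕ) ≠ 0 := fun hc => (hne i) (Fin.ext hc)
        simp only [Fin.val_zero]
        omega
      · simp [unpeelB]
    · funext i
      simp only [unpeelB]
      exact Fin.succ_pred _ _

lemma cardB :
    Nat.card {p : Matrix (Fin (r+1)) (Fin (c+1)) Fq × (Fin (r+1) → Fin (c+1)) //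
        IsRREF p.1 p.2 ∧ ¬ p.2 0 = 0}
      = rrefCount Fq c (r+1) := by
  classical
  have e : {x : Matrix (Fin (r+1)) (Fin c) Fq × (Fin (r+1) → Fin c) // IsRREF x.1 x.2}
      ≃ {p : Matrix (Fin (r+1)) (Fin (c+1)) Fq × (Fin (r+1) → Fin (c+1)) //
        IsRREF p.1 p.2 ∧ ¬ p.2 0 = 0} := by
    refine Equiv.ofBijective (fun x => ⟨unpeelB x.1, unpeelB_mem x.2⟩) ⟨?_, ?_⟩
    · intro x y hxy
      exact Subtype.ext (unpeelB_inj (congrArg Subtype.val hxy))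
    · rintro ⟨p, hp⟩
      obtain ⟨x, hx, hxp⟩ := unpeelB_surj hp
      exact ⟨⟨x, hx⟩, Subtype.ext hxp⟩
  rw [← Nat.card_congr e, rrefCount]

lemma rrefCount_succ (hrc : r ≤ c) :
    rrefCount Fq (c+1) (r+1)
      = Fintype.card Fq ^ (c - r) * rrefCount Fq c r + rrefCount Fq c (r+1) := by
  rw [rrefCount, card_split _ (fun p => p.2 0 = 0), cardA hrc, cardB]

lemma two_le_card (Fq : Type) [Field Fq] [Fintype Fq] : 2 ≤ Fintype.card Fq :=
  Fintype.one_lt_card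

lemma rrefCount_cast (c r : ℕ) :
    (rrefCount Fq c r : ℚ) = gaussQ (Fintype.card Fq) c r := by
  induction c generalizing r with
  | zero =>
    cases r with
    | zero => rw [rrefCount_zero_rows, gaussQ_zero_right (two_le_card Fq)]; norm_num
    | succ r' =>
      rw [rrefCount_eq_zero (Nat.succ_pos r'), gaussQ_eq_zero (two_le_card Fq) (Nat.succ_pos r')]
      norm_num
  | succ c ih =>
    cases r with
    | zero => rw [rrefCount_zero_rows, gaussQ_zero_right (two_le_card Fq)]; norm_num
    | succ r' =>
      by_cases hrc : r' ≤ c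
      · rw [rrefCount_succ hrc, gaussQ_pascal (two_le_card Fq) (Nat.succ_pos r')
          (by omega : r' + 1 ≤ c + 1)]
        push_cast
        rw [ih r', ih (r'+1)]
      · rw [rrefCount_eq_zero (by omega), gaussQ_eq_zero (two_le_card Fq) (by omega)]
        norm_num

end Count2
section Helpers

lemma mem_upward_filter {k : ℕ} (s : Finset (Fin k))
    (hup : ∀ i i' : Fin k, i ≤ i' → i ∈ s → i' ∈ s) (i : Fin k) :
    i ∈ s ↔ k - s.card ≤ (i : ℕ) := by
  constructor
  · intro hi
    have hsub : Finset.Ici i ⊆ s := by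
      intro j hj
      exact hup i j (Finset.mem_Ici.1 hj) hi
    have := Finset.card_le_card hsub
    rw [Fin.card_Ici] at this
    omega
  · intro hi
    by_contra hcon
    have hsub : s ⊆ Finset.Ioi i := by
      intro j hj
      rw [Finset.mem_Ioi]
      rcases lt_or_ge i j with h | h
      · exact h
      · exact absurd (hup j i h hj) hcon
    have hc := Finset.card_le_card hsub
    rw [Fin.card_Ioi] at hc
    have := i.isLt
    omega

lemma card_exists_split {α ι : Type*} [Fintype α] [Fintype ι] (R : α → Prop) (P : ι → α → Prop)
    (huniq : ∀ x c c', P c x → P c' x → c = c') :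
    Nat.card {x // R x ∧ ∃ c, P c x} = ∑ c : ι, Nat.card {x // R x ∧ P c x} := by
  classical
  rw [Nat.card_eq_fintype_card, Fintype.card_subtype]
  have hU : Finset.univ.filter (fun x => R x ∧ ∃ c, P c x)
      = Finset.univ.biUnion (fun c => Finset.univ.filter (fun x => R x ∧ P c x)) := by
    ext x
    simp only [Finset.mem_filter, Finset.mem_univ, true_and, Finset.mem_biUnion]
    tauto
  have hdisj : ∀ c ∈ Finset.univ, ∀ c' ∈ Finset.univ, c ≠ c' →
      Disjoint (Finset.univ.filter (fun x => R x ∧ P c x))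
        (Finset.univ.filter (fun x => R x ∧ P c' x)) := by
    intro c _ c' _ hcc
    rw [Finset.disjoint_left]
    intro x hx hx'
    simp only [Finset.mem_filter] at hx hx'
    exact hcc (huniq x c c' hx.2.2 hx'.2.2)
  rw [hU, Finset.card_biUnion hdisj]
  exact Finset.sum_congr rfl (fun c _ => by
    rw [Nat.card_eq_fintype_card, Fintype.card_subtype])

variable {Fq : Type} [Field Fq] [Fintype Fq] (φ : Fq ≃ Fin (Fintype.card Fq))

lemma colB_restrict {k r : ℕ} (hrk : r ≤ k) (hφ0 : (φ 0 : ℕ) = 0) (v : Fin k → Fq)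
    (hv : ∀ i : Fin k, r ≤ (i : ℕ) → v i = 0) :
    colB φ v = Fintype.card Fq ^ (k - r) * colB φ (fun i : Fin r => v (Fin.castLE hrk i)) := by
  unfold colB
  rw [Finset.mul_sum]
  rw [← Finset.sum_filter_add_sum_filter_not Finset.univ (fun i : Fin k => (i : ℕ) < r)]
  have h2 : ∑ i ∈ Finset.univ.filter (fun i : Fin k => ¬ (i : ℕ) < r),
      (φ (v i) : ℕ) * (Fintype.card Fq) ^ (k - 1 - (i : ℕ)) = 0 := by
    apply Finset.sum_eq_zero
    intro i hi
    simp only [Finset.mem_filter, not_lt] at hi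
    rw [hv i hi.2, hφ0, zero_mul]
  rw [h2, add_zero]
  refine Finset.sum_bij' (fun (j : Fin k) hj => (⟨(j : ℕ), by
      simp only [Finset.mem_filter] at hj; exact hj.2⟩ : Fin r))
    (fun (i : Fin r) _ => Fin.castLE hrk i) ?_ ?_ ?_ ?_ ?_
  · intro a ha; exact Finset.mem_univ _
  · intro a ha
    simp only [Finset.mem_filter, Finset.mem_univ, true_and, Fin.coe_castLE]
    exact a.isLt
  · intro a ha; apply Fin.ext; rfl
  · intro a ha; apply Fin.ext; rfl
  · intro a ha
    have ha' : (a : ℕ) < r := by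
      simpa only [Finset.mem_filter, Finset.mem_univ, true_and] using ha
    have hval : Fin.castLE hrk (⟨(a : ℕ), ha'⟩ : Fin r) = a := by apply Fin.ext; rfl
    simp only [hval]
    have hpow : (Fintype.card Fq) ^ (k - 1 - (a : ℕ))
        = (Fintype.card Fq) ^ (k - r) * (Fintype.card Fq) ^ (r - 1 - (a : ℕ)) := by
      rw [← pow_add]
      congr 1
      omega
    rw [hpow]
    ring

lemma colB_unit {k : ℕ} (hφ0 : (φ 0 : ℕ) = 0) (hφ1 : (φ 1 : ℕ) = 1) (v : Fin k → Fq)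
    (i0 : Fin k) (h1 : v i0 = 1) (h0 : ∀ i, i ≠ i0 → v i = 0) :
    colB φ v = Fintype.card Fq ^ (k - 1 - (i0 : ℕ)) := by
  unfold colB
  rw [Finset.sum_eq_single i0]
  · rw [h1, hφ1, one_mul]
  · intro i _ hi
    rw [h0 i hi, hφ0, zero_mul]
  · intro h; exact absurd (Finset.mem_univ i0) h

end Helpers
section Struct

variable {Fq : Type} [Field Fq] [Fintype Fq] {n k : ℕ}

/-- the paper's `w_{j-1}`: number of pivots in columns right of (Lean-index above) `c` -/
def wcol (piv : Fin k → Fin n) (c : Fin n) : ℕ :=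
  (Finset.univ.filter (fun i => (c : ℕ) < (piv i : ℕ))).card

lemma wcol_le (piv : Fin k → Fin n) (c : Fin n) : wcol piv c ≤ k := by
  unfold wcol
  calc (Finset.univ.filter (fun i => (c : ℕ) < (piv i : ℕ))).card
      ≤ Finset.univ.card := Finset.card_le_card (Finset.filter_subset _ _)
    _ = k := by rw [Finset.card_univ, Fintype.card_fin]

/-- the witness-column property of the lexicographic order -/
def Pcol (φ : Fq ≃ Fin (Fintype.card Fq)) (M : Matrix (Fin k) (Fin n) Fq)
    (piv : Fin k → Fin n) (c : Fin n)
    (p : Matrix (Fin k) (Fin n) Fq × (Fin k → Fin n)) : Prop :=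
  (∀ c' : Fin n, c < c' →
      (((∃ i, p.2 i = c') ↔ (∃ i, piv i = c')) ∧ ∀ i, p.1 i c' = M i c')) ∧
    extVal φ p.1 p.2 c < extVal φ M piv c

lemma extLt_iff_exists_Pcol (φ : Fq ≃ Fin (Fintype.card Fq)) (M : Matrix (Fin k) (Fin n) Fq)
    (piv : Fin k → Fin n) (p : Matrix (Fin k) (Fin n) Fq × (Fin k → Fin n)) :
    ExtLt φ p.1 p.2 M piv ↔ ∃ c, Pcol φ M piv c p := Iff.rfl

lemma Pcol_unique (φ : Fq ≃ Fin (Fintype.card Fq)) (M : Matrix (Fin k) (Fin n) Fq)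
    (piv : Fin k → Fin n) (p : Matrix (Fin k) (Fin n) Fq × (Fin k → Fin n))
    (c c' : Fin n) (h : Pcol φ M piv c p) (h' : Pcol φ M piv c' p) : c = c' := by
  by_contra hne
  wlog hlt : c < c' generalizing c c'
  · exact this c' c h' h (fun hc => hne hc.symm) (by
      rcases lt_trichotomy c c' with h1 | h1 | h1
      · exact absurd h1 hlt
      · exact absurd h1 hne
      · exact h1)
  obtain ⟨hiff, hcols⟩ := h.1 c' hlt
  have : extVal φ p.1 p.2 c' = extVal φ M piv c' := by
    unfold extVal colVal
    congr 1
    · by_cases hex : ∃ i, p.2 i = c'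
      · rw [if_pos hex, if_pos (hiff.1 hex)]
      · rw [if_neg hex, if_neg (fun hx => hex (hiff.2 hx))]
    · exact Finset.sum_congr rfl (fun i _ => by rw [hcols i])
  have h2 := h'.2
  rw [this] at h2
  exact lt_irrefl _ h2

variable (φ : Fq ≃ Fin (Fintype.card Fq)) {M : Matrix (Fin k) (Fin n) Fq}
  {piv : Fin k → Fin n} {c : Fin n}

lemma pivot_iff_ge (hmono : StrictMono piv) (i : Fin k) :
    (c : ℕ) < (piv i : ℕ) ↔ k - wcol piv c ≤ (i : ℕ) := by
  have hup : ∀ i i' : Fin k, i ≤ i' → i ∈ Finset.univ.filter (fun i => (c : ℕ) < (piv i : ℕ))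
      → i' ∈ Finset.univ.filter (fun i => (c : ℕ) < (piv i : ℕ)) := by
    intro a b hab ha
    simp only [Finset.mem_filter, Finset.mem_univ, true_and] at ha ⊢
    have : piv a ≤ piv b := hmono.monotone hab
    have : (piv a : ℕ) ≤ (piv b : ℕ) := this
    omega
  have := mem_upward_filter _ hup i
  simp only [Finset.mem_filter, Finset.mem_univ, true_and] at this
  rw [this]
  rfl

lemma colVal_pivot_col {N : Matrix (Fin k) (Fin n) Fq} {piv' : Fin k → Fin n} {w : ℕ}
    (hφ0 : (φ 0 : ℕ) = 0) (hφ1 : (φ 1 : ℕ) = 1)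
    (h : IsRREF N piv') (hiff : ∀ i : Fin k, (c : ℕ) < (piv' i : ℕ) ↔ k - w ≤ (i : ℕ))
    (hex : ∃ i, piv' i = c) (hw : w ≤ k) :
    colVal φ N c = Fintype.card Fq ^ w := by
  obtain ⟨i0, hi0⟩ := hex
  have hnot : ¬ ((c : ℕ) < (piv' i0 : ℕ)) := by rw [hi0]; exact lt_irrefl _
  have hi0lt : (i0 : ℕ) < k - w := by
    by_contra hcon
    exact hnot ((hiff i0).2 (by omega))
  have hik := i0.isLt
  have hi0eq : (i0 : ℕ) = k - w - 1 := by
    by_contra hne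
    have hlt : (i0 : ℕ) + 1 < k - w := by omega
    have hlt' : (i0 : ℕ) + 1 < k := by omega
    have hmlt : i0 < (⟨(i0 : ℕ) + 1, hlt'⟩ : Fin k) := by
      rw [Fin.lt_def]
      show (i0 : ℕ) < (i0 : ℕ) + 1
      omega
    have hplt : piv' i0 < piv' ⟨(i0 : ℕ) + 1, hlt'⟩ := h.1 hmlt
    have hc : (c : ℕ) < (piv' ⟨(i0 : ℕ) + 1, hlt'⟩ : ℕ) := by
      rw [← hi0]
      exact hplt
    have h2 : k - w ≤ (i0 : ℕ) + 1 := by simpa using (hiff _).1 hc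
    omega
  have hcol : colVal φ N c = colB φ (fun i => N i c) := rfl
  rw [hcol, colB_unit φ hφ0 hφ1 _ i0 (by rw [← hi0]; exact h.2.1 i0)
    (fun i hi => by rw [← hi0]; exact h.2.2.2 i0 i hi)]
  congr 1
  omega

lemma colVal_restrict_col {N : Matrix (Fin k) (Fin n) Fq} {piv' : Fin k → Fin n} {w : ℕ}
    (hφ0 : (φ 0 : ℕ) = 0)
    (h : IsRREF N piv') (hiff : ∀ i : Fin k, (c : ℕ) < (piv' i : ℕ) ↔ k - w ≤ (i : ℕ))
    (hw : w ≤ k) :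
    colVal φ N c = Fintype.card Fq ^ w
      * colB φ (fun i : Fin (k - w) => N (Fin.castLE (Nat.sub_le k w) i) c) := by
  have hcol : colVal φ N c = colB φ (fun i => N i c) := rfl
  rw [hcol, colB_restrict φ (Nat.sub_le k w) hφ0 _ (fun i hi => h.2.2.1 i c ((hiff i).2 hi))]
  congr 2
  omega

lemma Pcol_struct (hφ0 : (φ 0 : ℕ) = 0) (hφ1 : (φ 1 : ℕ) = 1)
    (hM : IsRREF M piv) {p : Matrix (Fin k) (Fin n) Fq × (Fin k → Fin n)}
    (hp : IsRREF p.1 p.2 ∧ Pcol φ M piv c p) :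
    (∀ i : Fin k, (c : ℕ) < (p.2 i : ℕ) ↔ k - wcol piv c ≤ (i : ℕ))
    ∧ (∀ i : Fin k, k - wcol piv c ≤ (i : ℕ) → p.2 i = piv i)
    ∧ (∀ i : Fin k, k - wcol piv c ≤ (i : ℕ) → ∀ j, p.1 i j = M i j)
    ∧ ¬ ∃ i, p.2 i = c := by
  obtain ⟨hR, hPc⟩ := hp
  have hagree := hPc.1
  have hval := hPc.2
  set w := wcol piv c with hwdef
  have hwk : w ≤ k := wcol_le piv c
  -- image equality above column c
  have himg : (Finset.univ.filter (fun i => (c : ℕ) < (p.2 i : ℕ))).image p.2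
      = (Finset.univ.filter (fun i => (c : ℕ) < (piv i : ℕ))).image piv := by
    ext x
    simp only [Finset.mem_image, Finset.mem_filter, Finset.mem_univ, true_and]
    constructor
    · rintro ⟨i, hci, rfl⟩
      have hcx : c < p.2 i := by rw [Fin.lt_def]; exact hci
      obtain ⟨j, hj⟩ := (hagree _ hcx).1.1 ⟨i, rfl⟩
      exact ⟨j, by rw [hj]; exact hci, hj⟩
    · rintro ⟨i, hci, rfl⟩
      have hcx : c < piv i := by rw [Fin.lt_def]; exact hci
      obtain ⟨j, hj⟩ := (hagree _ hcx).1.2 ⟨i, rfl⟩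
      exact ⟨j, by rw [hj]; exact hci, hj⟩
  have hcard : (Finset.univ.filter (fun i => (c : ℕ) < (p.2 i : ℕ))).card = w := by
    rw [hwdef, wcol]
    rw [← Finset.card_image_of_injective
      (Finset.univ.filter (fun i => (c : ℕ) < (p.2 i : ℕ))) hR.1.injective, himg,
      Finset.card_image_of_injective _ hM.1.injective]
  -- (c') : pivots above c are exactly the top w rows
  have hiff : ∀ i : Fin k, (c : ℕ) < (p.2 i : ℕ) ↔ k - w ≤ (i : ℕ) := by
    intro i
    have hup : ∀ a b : Fin k, a ≤ b →
        a ∈ Finset.univ.filter (fun i => (c : ℕ) < (p.2 i : ℕ))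
        → b ∈ Finset.univ.filter (fun i => (c : ℕ) < (p.2 i : ℕ)) := by
      intro a b hab ha
      simp only [Finset.mem_filter, Finset.mem_univ, true_and] at ha ⊢
      have : (p.2 a : ℕ) ≤ (p.2 b : ℕ) := hR.1.monotone hab
      omega
    have := mem_upward_filter _ hup i
    simp only [Finset.mem_filter, Finset.mem_univ, true_and] at this
    rw [hcard] at this
    exact this
  have hiffM : ∀ i : Fin k, (c : ℕ) < (piv i : ℕ) ↔ k - w ≤ (i : ℕ) :=
    pivot_iff_ge hM.1
  -- (d) : p.2 agrees with piv on the top w rows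
  have hd : ∀ i : Fin k, k - w ≤ (i : ℕ) → p.2 i = piv i := by
    intro i hi
    rcases Nat.eq_zero_or_pos w with hw0 | hwpos
    · exfalso
      have := i.isLt
      omega
    · have hklt : ∀ t : Fin w, k - w + (t : ℕ) < k := fun t => by
        have := t.isLt
        omega
      set e1 : Fin w → Fin n := fun t => piv ⟨k - w + (t : ℕ), hklt t⟩ with he1
      set e2 : Fin w → Fin n := fun t => p.2 ⟨k - w + (t : ℕ), hklt t⟩ with he2
      have hmono1 : StrictMono e1 := by
        intro a b hab
        apply hM.1
        rw [Fin.lt_def]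
        simp only
        omega
      have hmono2 : StrictMono e2 := by
        intro a b hab
        apply hR.1
        rw [Fin.lt_def]
        simp only
        omega
      have hik := i.isLt
      have himg1 : Finset.image e1 Finset.univ
          = (Finset.univ.filter (fun i => (c : ℕ) < (piv i : ℕ))).image piv := by
        ext x
        simp only [Finset.mem_image, Finset.mem_univ, true_and, Finset.mem_filter]
        constructor
        · rintro ⟨t, rfl⟩
          exact ⟨⟨k - w + (t : ℕ), hklt t⟩,
            (hiffM _).2 (by show k - w ≤ k - w + (t : ℕ); omega), rfl⟩
        · rintro ⟨i', hci, rfl⟩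
          have hge := (hiffM i').1 hci
          have hik' := i'.isLt
          exact ⟨⟨(i' : ℕ) - (k - w), by omega⟩,
            congrArg piv (Fin.ext (by show k - w + ((i' : ℕ) - (k - w)) = (i' : ℕ); omega))⟩
      have himg2 : Finset.image e2 Finset.univ
          = (Finset.univ.filter (fun i => (c : ℕ) < (p.2 i : ℕ))).image p.2 := by
        ext x
        simp only [Finset.mem_image, Finset.mem_univ, true_and, Finset.mem_filter]
        constructor
        · rintro ⟨t, rfl⟩
          exact ⟨⟨k - w + (t : ℕ), hklt t⟩,
            (hiff _).2 (by show k - w ≤ k - w + (t : ℕ); omega), rfl⟩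
        · rintro ⟨i', hci, rfl⟩
          have hge := (hiff i').1 hci
          have hik' := i'.isLt
          exact ⟨⟨(i' : ℕ) - (k - w), by omega⟩,
            congrArg p.2 (Fin.ext (by show k - w + ((i' : ℕ) - (k - w)) = (i' : ℕ); omega))⟩
      have heq : e2 = e1 := by
        apply strictMono_eq_of_image_eq hmono2 hmono1
        rw [himg1, himg2, himg]
      have step1 : p.2 i = e2 ⟨(i : ℕ) - (k - w), by omega⟩ :=
        congrArg p.2 (Fin.ext (by show (i : ℕ) = k - w + ((i : ℕ) - (k - w)); omega))
      have step3 : e1 (⟨(i : ℕ) - (k - w), by omega⟩ : Fin w) = piv i :=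
        congrArg piv (Fin.ext (by show k - w + ((i : ℕ) - (k - w)) = (i : ℕ); omega))
      rw [step1, heq, step3]
  -- (f) : rows in the top w rows agree with M
  have hf : ∀ i : Fin k, k - w ≤ (i : ℕ) → ∀ j, p.1 i j = M i j := by
    intro i hi j
    rcases lt_or_ge (c : ℕ) (j : ℕ) with hcj | hcj
    · exact (hagree j (by rw [Fin.lt_def]; exact hcj)).2 i
    · have h1 : p.1 i j = 0 := hR.2.2.1 i j (by
        have := (hiff i).2 hi
        omega)
      have h2 : M i j = 0 := hM.2.2.1 i j (by
        have := (hiffM i).2 hi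
        omega)
      rw [h1, h2]
  refine ⟨hiff, hd, hf, ?_⟩
  -- (e) : no pivot at column c
  intro hex
  have hcolN := colVal_pivot_col φ hφ0 hφ1 hR hiff hex hwk
  have hlt := hval
  by_cases hMex : ∃ i, piv i = c
  · have hcolM := colVal_pivot_col φ hφ0 hφ1 hM hiffM hMex hwk
    unfold extVal at hlt
    rw [if_pos hex, if_pos hMex, hcolN, hcolM] at hlt
    exact lt_irrefl _ hlt
  · have hcolM : colVal φ M c < Fintype.card Fq ^ k := colB_lt φ (fun i => M i c)
    unfold extVal at hlt
    rw [if_pos hex, if_neg hMex] at hlt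
    omega

end Struct
section UnpeelC

variable {Fq : Type} [Field Fq] [Fintype Fq] {n k : ℕ}

/-- reconstruct a full matrix-pivot pair from its block below/left of witness column `c` -/
def unpeelC (M : Matrix (Fin k) (Fin n) Fq) (piv : Fin k → Fin n) (c : Fin n)
    (x : (Matrix (Fin (k - wcol piv c)) (Fin (c : ℕ)) Fq
        × (Fin (k - wcol piv c) → Fin (c : ℕ))) × (Fin (k - wcol piv c) → Fq)) :
    Matrix (Fin k) (Fin n) Fq × (Fin k → Fin n) :=
  (Matrix.of fun i j =>
    if hi : (i : ℕ) < k - wcol piv c then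
      (if hj : (j : ℕ) < (c : ℕ) then x.1.1 ⟨(i : ℕ), hi⟩ ⟨(j : ℕ), hj⟩
       else if (j : ℕ) = (c : ℕ) then x.2 ⟨(i : ℕ), hi⟩ else M i j)
    else M i j,
   fun i => if hi : (i : ℕ) < k - wcol piv c then
      ⟨((x.1.2 ⟨(i : ℕ), hi⟩ : Fin (c : ℕ)) : ℕ), lt_trans (x.1.2 ⟨(i : ℕ), hi⟩).isLt c.isLt⟩
    else piv i)

/-- the count of admissible values for the witness column -/
noncomputable def colA (φ : Fq ≃ Fin (Fintype.card Fq)) (M : Matrix (Fin k) (Fin n) Fq)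
    (piv : Fin k → Fin n) (c : Fin n) : ℕ :=
  if ∃ i, piv i = c then Fintype.card Fq ^ (k - wcol piv c)
  else colB φ (fun i : Fin (k - wcol piv c) => M (Fin.castLE (Nat.sub_le k (wcol piv c)) i) c)

variable {M : Matrix (Fin k) (Fin n) Fq} {piv : Fin k → Fin n} {c : Fin n}
  (φ : Fq ≃ Fin (Fintype.card Fq))

lemma colA_le (φ : Fq ≃ Fin (Fintype.card Fq)) :
    colA φ M piv c ≤ Fintype.card Fq ^ (k - wcol piv c) := by
  unfold colA
  split
  · exact le_rfl
  · exact le_of_lt (colB_lt φ _)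

section evals

variable (x : (Matrix (Fin (k - wcol piv c)) (Fin (c : ℕ)) Fq
    × (Fin (k - wcol piv c) → Fin (c : ℕ))) × (Fin (k - wcol piv c) → Fq))

lemma unpeelC_N_block (i : Fin k) (hi : (i : ℕ) < k - wcol piv c) (j : Fin n)
    (hj : (j : ℕ) < (c : ℕ)) :
    (unpeelC M piv c x).1 i j = x.1.1 ⟨(i : ℕ), hi⟩ ⟨(j : ℕ), hj⟩ := by
  show (if hi : (i : ℕ) < k - wcol piv c then _ else _) = _
  rw [dif_pos hi, dif_pos hj]

lemma unpeelC_N_col (i : Fin k) (hi : (i : ℕ) < k - wcol piv c) (j : Fin n)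
    (hj : (j : ℕ) = (c : ℕ)) :
    (unpeelC M piv c x).1 i j = x.2 ⟨(i : ℕ), hi⟩ := by
  show (if hi : (i : ℕ) < k - wcol piv c then _ else _) = _
  rw [dif_pos hi, dif_neg (by omega : ¬ (j : ℕ) < (c : ℕ)), if_pos hj]

lemma unpeelC_N_right (i : Fin k) (hi : (i : ℕ) < k - wcol piv c) (j : Fin n)
    (hj : (c : ℕ) < (j : ℕ)) :
    (unpeelC M piv c x).1 i j = M i j := by
  show (if hi : (i : ℕ) < k - wcol piv c then _ else _) = _
  rw [dif_pos hi, dif_neg (by omega : ¬ (j : ℕ) < (c : ℕ)), if_neg (by omega)]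

lemma unpeelC_N_bot (i : Fin k) (hi : ¬ (i : ℕ) < k - wcol piv c) (j : Fin n) :
    (unpeelC M piv c x).1 i j = M i j := by
  show (if hi : (i : ℕ) < k - wcol piv c then _ else _) = _
  rw [dif_neg hi]

lemma unpeelC_piv_top (i : Fin k) (hi : (i : ℕ) < k - wcol piv c) :
    ((unpeelC M piv c x).2 i : ℕ) = ((x.1.2 ⟨(i : ℕ), hi⟩ : Fin (c : ℕ)) : ℕ) := by
  show ((if hi : (i : ℕ) < k - wcol piv c then _ else _ : Fin n) : ℕ) = _
  rw [dif_pos hi]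

lemma unpeelC_piv_bot (i : Fin k) (hi : ¬ (i : ℕ) < k - wcol piv c) :
    (unpeelC M piv c x).2 i = piv i := by
  show (if hi : (i : ℕ) < k - wcol piv c then _ else _) = _
  rw [dif_neg hi]

end evals

lemma unpeelC_mem (hφ0 : (φ 0 : ℕ) = 0) (hM : IsRREF M piv)
    {x : (Matrix (Fin (k - wcol piv c)) (Fin (c : ℕ)) Fq
        × (Fin (k - wcol piv c) → Fin (c : ℕ))) × (Fin (k - wcol piv c) → Fq)}
    (hx : IsRREF x.1.1 x.1.2 ∧ colB φ x.2 < colA φ M piv c) :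
    IsRREF (unpeelC M piv c x).1 (unpeelC M piv c x).2
      ∧ Pcol φ M piv c (unpeelC M piv c x) := by
  obtain ⟨⟨hbmono, hb1, hb2, hb3⟩, hcolb⟩ := hx
  have hwk : wcol piv c ≤ k := wcol_le piv c
  have hiffM : ∀ i : Fin k, (c : ℕ) < (piv i : ℕ) ↔ k - wcol piv c ≤ (i : ℕ) := pivot_iff_ge hM.1
  have hq0 : 0 < Fintype.card Fq := Fintype.card_pos
  -- RREF of the assembled pair
  have hrref : IsRREF (unpeelC M piv c x).1 (unpeelC M piv c x).2 := by
    refine ⟨?_, ?_, ?_, ?_⟩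
    · -- strict mono
      intro a b hab
      rw [Fin.lt_def] at hab ⊢
      by_cases ha : (a : ℕ) < k - wcol piv c
      · by_cases hb : (b : ℕ) < k - wcol piv c
        · rw [unpeelC_piv_top (M := M) x a ha, unpeelC_piv_top (M := M) x b hb]
          have hblt : (⟨(a : ℕ), ha⟩ : Fin (k - wcol piv c)) < ⟨(b : ℕ), hb⟩ := by
            rw [Fin.lt_def]; exact hab
          exact hbmono hblt
        · rw [unpeelC_piv_top (M := M) x a ha, unpeelC_piv_bot (M := M) x b hb]
          have h1 : ((x.1.2 ⟨(a : ℕ), ha⟩ : Fin (c : ℕ)) : ℕ) < (c : ℕ) :=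
            (x.1.2 ⟨(a : ℕ), ha⟩).isLt
          have h2 : (c : ℕ) < (piv b : ℕ) := (hiffM b).2 (by omega)
          omega
      · have hb : ¬ (b : ℕ) < k - wcol piv c := by omega
        rw [unpeelC_piv_bot (M := M) x a ha, unpeelC_piv_bot (M := M) x b hb]
        exact hM.1 (by rw [Fin.lt_def]; exact hab)
    · -- pivot entries 1
      intro i
      by_cases hi : (i : ℕ) < k - wcol piv c
      · have hpv := unpeelC_piv_top (M := M) x i hi
        have hpc : (((unpeelC M piv c x).2 i : Fin n) : ℕ) < (c : ℕ) := by
          rw [hpv]; exact (x.1.2 ⟨(i : ℕ), hi⟩).isLt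
        rw [unpeelC_N_block (M := M) x i hi _ hpc]
        have : (⟨(((unpeelC M piv c x).2 i : Fin n) : ℕ), hpc⟩ : Fin (c : ℕ))
            = x.1.2 ⟨(i : ℕ), hi⟩ := Fin.ext hpv
        rw [this]
        exact hb1 _
      · rw [unpeelC_piv_bot (M := M) x i hi, unpeelC_N_bot (M := M) x i hi]
        exact hM.2.1 i
    · -- zeros left of pivots
      intro i j hj
      by_cases hi : (i : ℕ) < k - wcol piv c
      · rw [unpeelC_piv_top (M := M) x i hi] at hj
        have hjc : (j : ℕ) < (c : ℕ) := lt_trans hj (x.1.2 ⟨(i : ℕ), hi⟩).isLt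
        rw [unpeelC_N_block (M := M) x i hi j hjc]
        exact hb2 ⟨(i : ℕ), hi⟩ ⟨(j : ℕ), hjc⟩ hj
      · rw [unpeelC_piv_bot (M := M) x i hi] at hj
        rw [unpeelC_N_bot (M := M) x i hi]
        exact hM.2.2.1 i j hj
    · -- zeros elsewhere in pivot columns
      intro i i' hii
      by_cases hi : (i : ℕ) < k - wcol piv c
      · have hpv := unpeelC_piv_top (M := M) x i hi
        have hpc : (((unpeelC M piv c x).2 i : Fin n) : ℕ) < (c : ℕ) := by
          rw [hpv]; exact (x.1.2 ⟨(i : ℕ), hi⟩).isLt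
        by_cases hi' : (i' : ℕ) < k - wcol piv c
        · rw [unpeelC_N_block (M := M) x i' hi' _ hpc]
          have heq : (⟨(((unpeelC M piv c x).2 i : Fin n) : ℕ), hpc⟩ : Fin (c : ℕ))
              = x.1.2 ⟨(i : ℕ), hi⟩ := Fin.ext hpv
          rw [heq]
          exact hb3 _ _ (fun hc => hii (by
            have := congrArg (fun z : Fin (k - wcol piv c) => (z : ℕ)) hc
            exact Fin.ext this))
        · rw [unpeelC_N_bot (M := M) x i' hi']
          apply hM.2.2.1 i'
          have : (c : ℕ) < (piv i' : ℕ) := (hiffM i').2 (by omega)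
          omega
      · rw [unpeelC_piv_bot (M := M) x i hi]
        by_cases hi' : (i' : ℕ) < k - wcol piv c
        · rw [unpeelC_N_right (M := M) x i' hi' _ ((hiffM i).2 (by omega))]
          exact hM.2.2.2 i i' (fun hc => hii hc)
        · rw [unpeelC_N_bot (M := M) x i' hi']
          exact hM.2.2.2 i i' hii
  refine ⟨hrref, ?_, ?_⟩
  · -- agreement above c
    intro c' hcc
    rw [Fin.lt_def] at hcc
    constructor
    · constructor
      · rintro ⟨i, hi⟩
        by_cases hik : (i : ℕ) < k - wcol piv c
        · exfalso
          have := unpeelC_piv_top (M := M) x i hik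
          rw [hi] at this
          have := (x.1.2 ⟨(i : ℕ), hik⟩).isLt
          omega
        · exact ⟨i, by rw [← unpeelC_piv_bot (M := M) x i hik]; exact hi⟩
      · rintro ⟨i, hi⟩
        have hik : ¬ (i : ℕ) < k - wcol piv c := by
          have : (c : ℕ) < (piv i : ℕ) := by rw [hi]; exact hcc
          have := (hiffM i).1 this
          omega
        exact ⟨i, by rw [unpeelC_piv_bot (M := M) x i hik]; exact hi⟩
    · intro i
      by_cases hik : (i : ℕ) < k - wcol piv c
      · exact unpeelC_N_right (M := M) x i hik c' hcc
      · exact unpeelC_N_bot (M := M) x i hik c'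
  · -- extVal strictly smaller at c
    have hnopiv : ¬ ∃ i, (unpeelC M piv c x).2 i = c := by
      rintro ⟨i, hi⟩
      by_cases hik : (i : ℕ) < k - wcol piv c
      · have := unpeelC_piv_top (M := M) x i hik
        rw [hi] at this
        have := (x.1.2 ⟨(i : ℕ), hik⟩).isLt
        omega
      · rw [unpeelC_piv_bot (M := M) x i hik] at hi
        have : (c : ℕ) < (piv i : ℕ) := (hiffM i).2 (by omega)
        omega
    have hiff'' : ∀ i : Fin k, (c : ℕ) < ((unpeelC M piv c x).2 i : ℕ) ↔ k - wcol piv c ≤ (i : ℕ) := by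
      intro i
      by_cases hik : (i : ℕ) < k - wcol piv c
      · rw [unpeelC_piv_top (M := M) x i hik]
        have := (x.1.2 ⟨(i : ℕ), hik⟩).isLt
        constructor
        · intro h; omega
        · intro h; omega
      · rw [unpeelC_piv_bot (M := M) x i hik]
        rw [hiffM i]
    have hcolval : colVal φ (unpeelC M piv c x).1 c
        = Fintype.card Fq ^ wcol piv c * colB φ x.2 := by
      rw [colVal_restrict_col φ hφ0 hrref hiff'' hwk]
      have hfun : (fun i : Fin (k - wcol piv c) =>
          (unpeelC M piv c x).1 (Fin.castLE (Nat.sub_le k (wcol piv c)) i) c) = x.2 := by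
        funext i
        rw [unpeelC_N_col (M := M) x _ (by exact i.isLt) c rfl]
        exact congrArg x.2 (Fin.ext rfl)
      rw [hfun]
    unfold extVal
    rw [if_neg hnopiv, hcolval, zero_add]
    by_cases hMex : ∃ i, piv i = c
    · rw [if_pos hMex]
      have h1 : Fintype.card Fq ^ wcol piv c * colB φ x.2
          < Fintype.card Fq ^ wcol piv c * Fintype.card Fq ^ (k - wcol piv c) := by
        apply (mul_lt_mul_iff_right₀ (Nat.pow_pos hq0)).mpr
        calc colB φ x.2 < colA φ M piv c := hcolb
          _ ≤ Fintype.card Fq ^ (k - wcol piv c) := colA_le φ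
      calc Fintype.card Fq ^ wcol piv c * colB φ x.2
          < Fintype.card Fq ^ wcol piv c * Fintype.card Fq ^ (k - wcol piv c) := h1
        _ = Fintype.card Fq ^ k := by rw [← pow_add]; congr 1; omega
        _ ≤ Fintype.card Fq ^ k + colVal φ M c := Nat.le_add_right _ _
    · rw [if_neg hMex, zero_add]
      rw [colVal_restrict_col φ hφ0 hM hiffM hwk]
      apply (mul_lt_mul_iff_right₀ (Nat.pow_pos hq0)).mpr
      have : colA φ M piv c
          = colB φ (fun i : Fin (k - wcol piv c) => M (Fin.castLE (Nat.sub_le k (wcol piv c)) i) c) := by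
        unfold colA
        rw [if_neg hMex]
      rw [← this]
      exact hcolb

end UnpeelC
section UnpeelC2

variable {Fq : Type} [Field Fq] [Fintype Fq] {n k : ℕ}
  {M : Matrix (Fin k) (Fin n) Fq} {piv : Fin k → Fin n} {c : Fin n}
  (φ : Fq ≃ Fin (Fintype.card Fq))

lemma unpeelC_inj : Function.Injective (unpeelC M piv c) := by
  intro x y h
  have hN := congrArg Prod.fst h
  have hP := congrArg Prod.snd h
  have hle : k - wcol piv c ≤ k := Nat.sub_le k (wcol piv c)
  refine Prod.ext (Prod.ext ?_ ?_) ?_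
  · funext i j
    have hik : (i : ℕ) < k - wcol piv c := i.isLt
    have hjc : (j : ℕ) < (c : ℕ) := j.isLt
    have h1 := congrFun (congrFun hN (⟨(i : ℕ), by omega⟩ : Fin k))
      (⟨(j : ℕ), by have := c.isLt; omega⟩ : Fin n)
    rw [unpeelC_N_block (M := M) x _ hik _ hjc, unpeelC_N_block (M := M) y _ hik _ hjc] at h1
    exact h1
  · funext i
    have hik : (i : ℕ) < k - wcol piv c := i.isLt
    have h1 := congrArg Fin.val (congrFun hP (⟨(i : ℕ), by omega⟩ : Fin k))
    rw [unpeelC_piv_top (M := M) x _ hik, unpeelC_piv_top (M := M) y _ hik] at h1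
    exact Fin.ext h1
  · funext i
    have hik : (i : ℕ) < k - wcol piv c := i.isLt
    have h1 := congrFun (congrFun hN (⟨(i : ℕ), by omega⟩ : Fin k)) c
    rw [unpeelC_N_col (M := M) x _ hik c rfl, unpeelC_N_col (M := M) y _ hik c rfl] at h1
    exact h1

lemma unpeelC_surj (hφ0 : (φ 0 : ℕ) = 0) (hφ1 : (φ 1 : ℕ) = 1) (hM : IsRREF M piv)
    {p : Matrix (Fin k) (Fin n) Fq × (Fin k → Fin n)}
    (hp : IsRREF p.1 p.2 ∧ Pcol φ M piv c p) :
    ∃ x, (IsRREF x.1.1 x.1.2 ∧ colB φ x.2 < colA φ M piv c) ∧ unpeelC M piv c x = p := by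
  obtain ⟨hiff, hd, hf, hnopiv⟩ := Pcol_struct φ hφ0 hφ1 hM hp
  obtain ⟨hR, hPc⟩ := hp
  have hagree := hPc.1
  have hval := hPc.2
  have hwk : wcol piv c ≤ k := wcol_le piv c
  have hiffM : ∀ i : Fin k, (c : ℕ) < (piv i : ℕ) ↔ k - wcol piv c ≤ (i : ℕ) :=
    pivot_iff_ge hM.1
  have hsub : k - wcol piv c ≤ k := Nat.sub_le k (wcol piv c)
  have hplt : ∀ i : Fin k, (i : ℕ) < k - wcol piv c → (p.2 i : ℕ) < (c : ℕ) := by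
    intro i hi
    have h1 : ¬ (c : ℕ) < (p.2 i : ℕ) := fun hc => by have := (hiff i).1 hc; omega
    have h2 : (p.2 i : ℕ) ≠ (c : ℕ) := fun hc => hnopiv ⟨i, Fin.ext hc⟩
    omega
  refine ⟨((Matrix.of fun i j => p.1 (Fin.castLE hsub i) ⟨(j : ℕ), lt_trans j.isLt c.isLt⟩,
      fun i => ⟨(p.2 (Fin.castLE hsub i) : ℕ), hplt (Fin.castLE hsub i) i.isLt⟩),
      fun i => p.1 (Fin.castLE hsub i) c), ⟨⟨?_, ?_, ?_, ?_⟩, ?_⟩, ?_⟩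
  · intro a b hab
    rw [Fin.lt_def]
    show (p.2 (Fin.castLE hsub a) : ℕ) < (p.2 (Fin.castLE hsub b) : ℕ)
    exact hR.1 (by rw [Fin.lt_def]; exact hab)
  · intro i
    show p.1 (Fin.castLE hsub i) _ = 1
    have : (⟨(p.2 (Fin.castLE hsub i) : ℕ), lt_trans (hplt _ i.isLt) c.isLt⟩ : Fin n)
        = p.2 (Fin.castLE hsub i) := Fin.ext rfl
    rw [this]
    exact hR.2.1 _
  · intro i j hj
    show p.1 (Fin.castLE hsub i) _ = 0
    exact hR.2.2.1 _ _ hj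
  · intro i i' hii
    show p.1 (Fin.castLE hsub i') _ = 0
    have : (⟨(p.2 (Fin.castLE hsub i) : ℕ), lt_trans (hplt _ i.isLt) c.isLt⟩ : Fin n)
        = p.2 (Fin.castLE hsub i) := Fin.ext rfl
    rw [this]
    exact hR.2.2.2 _ _ (fun hc => hii (by
      apply Fin.ext
      exact congrArg Fin.val (Fin.castLE_injective hsub hc) ▸ rfl))
  · -- the column value bound
    have hcolv : colVal φ p.1 c = Fintype.card Fq ^ (wcol piv c)
        * colB φ (fun i => p.1 (Fin.castLE (Nat.sub_le k (wcol piv c)) i) c) :=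
      colVal_restrict_col φ hφ0 hR hiff hwk
    by_cases hMex : ∃ i, piv i = c
    · unfold colA
      rw [if_pos hMex]
      exact colB_lt φ _
    · unfold colA
      rw [if_neg hMex]
      have hvM : colVal φ M c = Fintype.card Fq ^ (wcol piv c)
          * colB φ (fun i => M (Fin.castLE (Nat.sub_le k (wcol piv c)) i) c) :=
        colVal_restrict_col φ hφ0 hM hiffM hwk
      have h2 := hval
      unfold extVal at h2
      rw [if_neg hnopiv, if_neg hMex, zero_add, zero_add, hcolv, hvM] at h2
      exact Nat.lt_of_mul_lt_mul_left h2
  · -- reconstruction equals p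
    refine Prod.ext ?_ ?_
    · funext i j
      by_cases hik : (i : ℕ) < k - wcol piv c
      · rcases lt_trichotomy ((j : ℕ)) ((c : ℕ)) with hj | hj | hj
        · rw [unpeelC_N_block (M := M) _ i hik j hj]
          rfl
        · rw [unpeelC_N_col (M := M) _ i hik j hj]
          show p.1 _ c = p.1 i j
          rw [show j = c from Fin.ext hj]
          rfl
        · rw [unpeelC_N_right (M := M) _ i hik j hj]
          exact ((hagree j (by rw [Fin.lt_def]; exact hj)).2 i).symm
      · rw [unpeelC_N_bot (M := M) _ i hik j]
        exact (hf i (by omega) j).symm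
    · funext i
      by_cases hik : (i : ℕ) < k - wcol piv c
      · apply Fin.ext
        rw [unpeelC_piv_top (M := M) _ i hik]
        rfl
      · rw [unpeelC_piv_bot (M := M) _ i hik]
        exact (hd i (by omega)).symm

lemma cardC (hφ0 : (φ 0 : ℕ) = 0) (hφ1 : (φ 1 : ℕ) = 1) (hM : IsRREF M piv) :
    Nat.card {p : Matrix (Fin k) (Fin n) Fq × (Fin k → Fin n) //
        IsRREF p.1 p.2 ∧ Pcol φ M piv c p}
      = colA φ M piv c * rrefCount Fq (c : ℕ) (k - wcol piv c) := by
  classical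
  have e : {x : (Matrix (Fin (k - wcol piv c)) (Fin (c : ℕ)) Fq
        × (Fin (k - wcol piv c) → Fin (c : ℕ))) × (Fin (k - wcol piv c) → Fq) //
        IsRREF x.1.1 x.1.2 ∧ colB φ x.2 < colA φ M piv c}
      ≃ {p : Matrix (Fin k) (Fin n) Fq × (Fin k → Fin n) //
        IsRREF p.1 p.2 ∧ Pcol φ M piv c p} := by
    refine Equiv.ofBijective
      (fun x => ⟨unpeelC M piv c x.1, unpeelC_mem φ hφ0 hM x.2⟩) ⟨?_, ?_⟩
    · intro x y hxy
      exact Subtype.ext (unpeelC_inj (congrArg Subtype.val hxy))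
    · rintro ⟨p, hp⟩
      obtain ⟨x, hx, hxp⟩ := unpeelC_surj φ hφ0 hφ1 hM hp
      exact ⟨⟨x, hx⟩, Subtype.ext hxp⟩
  rw [← Nat.card_congr e]
  rw [Nat.card_congr (Equiv.subtypeProdEquivProd
    (p := fun a : Matrix (Fin (k - wcol piv c)) (Fin (c : ℕ)) Fq
        × (Fin (k - wcol piv c) → Fin (c : ℕ)) => IsRREF a.1 a.2)
    (q := fun t : Fin (k - wcol piv c) → Fq => colB φ t < colA φ M piv c))]
  rw [Nat.card_prod]
  rw [card_colB_lt φ (colA_le φ)]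
  rw [mul_comm]
  rfl

end UnpeelC2

set_option maxHeartbeats 2000000 in
/-- The lexicographic index of `X ∈ G_q(n,k)` in the extended-representation order:
the number of subspaces `Y < X` equals
`∑_{j=1}^n (v_j q^{k-w_{j-1}} + (1-v_j){X_j}/q^{w_{j-1}}) [n-j choose k-w_{j-1}]_q`.
Here column `c` of the Lean matrix corresponds to paper column `j = n - c`, so that
`n - j = c` and `w_{j-1}` is the number of pivots of `X` in columns `> c`. -/
theorem ext_lex_index (Fq : Type) [Field Fq] [Fintype Fq]
    (n k : ℕ) (hk : k ≤ n)
    (φ : Fq ≃ Fin (Fintype.card Fq)) (hφ0 : (φ 0 : ℕ) = 0) (hφ1 : (φ 1 : ℕ) = 1)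
    (M : Matrix (Fin k) (Fin n) Fq) (piv : Fin k → Fin n) (hM : IsRREF M piv) :
    (Nat.card {Y : Submodule Fq (Fin n → Fq) //
        ∃ (N : Matrix (Fin k) (Fin n) Fq) (piv' : Fin k → Fin n),
          IsRREF N piv' ∧ Submodule.span Fq (Set.range fun i => N i) = Y ∧
          ExtLt φ N piv' M piv } : ℚ)
      = ∑ c : Fin n,
          (if ∃ i, piv i = c then
              ((Fintype.card Fq : ℚ)) ^ (k - (Finset.univ.filter
                  (fun i => (c : ℕ) < (piv i : ℕ))).card)
            else (colVal φ M c : ℚ) / (Fintype.card Fq : ℚ) ^ ((Finset.univ.filter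
                  (fun i => (c : ℕ) < (piv i : ℕ))).card))
            * gaussQ (Fintype.card Fq) (c : ℕ)
                (k - (Finset.univ.filter (fun i => (c : ℕ) < (piv i : ℕ))).card) := by
  classical
  have hq0 : 0 < Fintype.card Fq := Fintype.card_pos
  have h1 : Nat.card {Y : Submodule Fq (Fin n → Fq) //
        ∃ (N : Matrix (Fin k) (Fin n) Fq) (piv' : Fin k → Fin n),
          IsRREF N piv' ∧ Submodule.span Fq (Set.range fun i => N i) = Y ∧
          ExtLt φ N piv' M piv}
      = Nat.card {p : Matrix (Fin k) (Fin n) Fq × (Fin k → Fin n) //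
          IsRREF p.1 p.2 ∧ ExtLt φ p.1 p.2 M piv} := by
    symm
    apply Nat.card_eq_of_bijective
      (fun p => (⟨Submodule.span Fq (Set.range fun i => p.1.1 i),
        p.1.1, p.1.2, p.2.1, rfl, p.2.2⟩ :
        {Y : Submodule Fq (Fin n → Fq) //
          ∃ (N : Matrix (Fin k) (Fin n) Fq) (piv' : Fin k → Fin n),
            IsRREF N piv' ∧ Submodule.span Fq (Set.range fun i => N i) = Y ∧
            ExtLt φ N piv' M piv}))
    constructor
    · intro p q hpq
      have hsp := congrArg Subtype.val hpq
      obtain ⟨hNe, hpe⟩ := rref_span_inj p.2.1 q.2.1 hsp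
      exact Subtype.ext (Prod.ext hNe hpe)
    · rintro ⟨Y, N, piv', hr, hs, hlt⟩
      exact ⟨⟨(N, piv'), hr, hlt⟩, Subtype.ext hs⟩
  rw [h1]
  have h2 : Nat.card {p : Matrix (Fin k) (Fin n) Fq × (Fin k → Fin n) //
        IsRREF p.1 p.2 ∧ ExtLt φ p.1 p.2 M piv}
      = ∑ c : Fin n, Nat.card {p : Matrix (Fin k) (Fin n) Fq × (Fin k → Fin n) //
          IsRREF p.1 p.2 ∧ Pcol φ M piv c p} := by
    exact card_exists_split
      (fun p : Matrix (Fin k) (Fin n) Fq × (Fin k → Fin n) => IsRREF p.1 p.2)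
      (fun c p => Pcol φ M piv c p)
      (fun p c c' hc hc' => Pcol_unique φ M piv p c c' hc hc')
  rw [h2]
  rw [Nat.cast_sum]
  apply Finset.sum_congr rfl
  intro c _
  rw [cardC φ hφ0 hφ1 hM, Nat.cast_mul, rrefCount_cast]
  have hwc : (Finset.univ.filter (fun i => (c : ℕ) < (piv i : ℕ))).card = wcol piv c := rfl
  simp only [hwc]
  by_cases hMex : ∃ i, piv i = c
  · rw [if_pos hMex]
    unfold colA
    rw [if_pos hMex]
    push_cast
    ring
  · rw [if_neg hMex]
    unfold colA
    rw [if_neg hMex]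
    have hvM : colVal φ M c = Fintype.card Fq ^ (wcol piv c)
        * colB φ (fun i => M (Fin.castLE (Nat.sub_le k (wcol piv c)) i) c) :=
      colVal_restrict_col φ hφ0 hM (pivot_iff_ge hM.1) (wcol_le piv c)
    rw [hvM]
    push_cast
    have hqne : ((Fintype.card Fq : ℚ)) ^ (wcol piv c) ≠ 0 := by
      apply pow_ne_zero
      exact_mod_cast Nat.pos_iff_ne_zero.1 hq0
    rw [mul_comm ((Fintype.card Fq : ℚ) ^ wcol piv c) _, mul_div_assoc, div_self hqne, mul_one]
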